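/- For dim H ≥ 2, the instruments I^p = {p₁·id, p₂·id} and I^q = {q₁·id, q₂·id} (with p_i, q_j marginals of a probability distribution r_{ij}) are not parallelly compatible, since parallel compatibility would imply compatibility of the identity channel with itself, contradicting no-cloning. -/

import Mathlib

open Matrix BigOperators ComplexOrder

noncomputable section

/-- Partial trace over the second tensor factor. -/
def ptraceRight {A B : Type*} [Fintype B] (M : Matrix (A × B) (A × B) ℂ) :
    Matrix A A ℂ := fun i j => ∑ k, M (i, k) (j, k)

/-- Partial trace over the first tensor factor. -/
def ptraceLeft {A B : Type*} [Fintype A] (M : Matrix (A × B) (A × B) ℂ) :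
    Matrix B B ℂ := fun i j => ∑ k, M (k, i) (k, j)

/-- Complete positivity, via existence of a Kraus decomposition (Choi's theorem). -/
def IsCP {H K : Type*} [Fintype H] [Fintype K]
    (Φ : Matrix H H ℂ →ₗ[ℂ] Matrix K K ℂ) : Prop :=
  ∃ (m : ℕ) (Ks : Fin m → Matrix K H ℂ), ∀ ρ, Φ ρ = ∑ i, Ks i * ρ * (Ks i)ᴴ

def IsTP {H K : Type*} [Fintype H] [Fintype K]
    (Φ : Matrix H H ℂ →ₗ[ℂ] Matrix K K ℂ) : Prop :=
  ∀ ρ, (Φ ρ).trace = ρ.trace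

/-- A quantum channel is a CPTP map. -/
def IsChannel {H K : Type*} [Fintype H] [Fintype K]
    (Φ : Matrix H H ℂ →ₗ[ℂ] Matrix K K ℂ) : Prop := IsCP Φ ∧ IsTP Φ

/-- A quantum instrument: a finite family of CP maps summing to a CPTP map. -/
def IsInstrument {ι H K : Type*} [Fintype ι] [Fintype H] [Fintype K]
    (Φ : ι → (Matrix H H ℂ →ₗ[ℂ] Matrix K K ℂ)) : Prop :=
  (∀ x, IsCP (Φ x)) ∧ IsTP (∑ x, Φ x)

def IsDensity {H : Type*} [Fintype H] (ρ : Matrix H H ℂ) : Prop :=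
  ρ.PosSemidef ∧ ρ.trace = 1

def IsPOVM {ι H : Type*} [Fintype ι] [Fintype H] [DecidableEq H]
    (A : ι → Matrix H H ℂ) : Prop :=
  (∀ x, (A x).PosSemidef) ∧ (∑ x, A x) = 1

/-- `Φd` is the Heisenberg dual of `Φ`. -/
def IsDual {H K : Type*} [Fintype H] [Fintype K]
    (Φ : Matrix H H ℂ →ₗ[ℂ] Matrix K K ℂ)
    (Φd : Matrix K K ℂ →ₗ[ℂ] Matrix H H ℂ) : Prop :=
  ∀ ρ X, ((Φ ρ) * X).trace = (ρ * Φd X).trace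

/-- The instrument `I` measures the observable `A`. -/
def ACompatible {ι H K : Type*} [Fintype ι] [Fintype H] [Fintype K]
    (A : ι → Matrix H H ℂ) (I : ι → (Matrix H H ℂ →ₗ[ℂ] Matrix K K ℂ)) : Prop :=
  ∀ ρ, IsDensity ρ → ∀ x, (I x ρ).trace = (ρ * A x).trace

/-- Observable-observable compatibility: existence of a joint POVM. -/
def ObsCompatible {ιx ιy H : Type*} [Fintype ιx] [Fintype ιy] [Fintype H] [DecidableEq H]
    (A : ιx → Matrix H H ℂ) (B : ιy → Matrix H H ℂ) : Prop :=
  ∃ G : ιx × ιy → Matrix H H ℂ, IsPOVM G ∧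
    (∀ x, ∑ y, G (x, y) = A x) ∧ (∀ y, ∑ x, G (x, y) = B y)

/-- Channel-channel compatibility: existence of a joint channel. -/
def ChannelsCompatible {H K₁ K₂ : Type*} [Fintype H] [Fintype K₁] [Fintype K₂]
    (Λ₁ : Matrix H H ℂ →ₗ[ℂ] Matrix K₁ K₁ ℂ)
    (Λ₂ : Matrix H H ℂ →ₗ[ℂ] Matrix K₂ K₂ ℂ) : Prop :=
  ∃ Λ : Matrix H H ℂ →ₗ[ℂ] Matrix (K₁ × K₂) (K₁ × K₂) ℂ, IsChannel Λ ∧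
    (∀ ρ, ptraceRight (Λ ρ) = Λ₁ ρ) ∧ (∀ ρ, ptraceLeft (Λ ρ) = Λ₂ ρ)

/-- Observable-channel compatibility. -/
def ObsChannelCompatible {ι H K : Type*} [Fintype ι] [Fintype H] [Fintype K]
    (A : ι → Matrix H H ℂ) (Λ : Matrix H H ℂ →ₗ[ℂ] Matrix K K ℂ) : Prop :=
  ∃ I : ι → (Matrix H H ℂ →ₗ[ℂ] Matrix K K ℂ),
    IsInstrument I ∧ ACompatible A I ∧ (∑ x, I x) = Λ

/-- Traditional compatibility of two instruments with the same output space. -/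
def TraditionallyCompatible {ιx ιy H K : Type*} [Fintype ιx] [Fintype ιy] [Fintype H] [Fintype K]
    (I₁ : ιx → (Matrix H H ℂ →ₗ[ℂ] Matrix K K ℂ))
    (I₂ : ιy → (Matrix H H ℂ →ₗ[ℂ] Matrix K K ℂ)) : Prop :=
  ∃ Φ : ιx × ιy → (Matrix H H ℂ →ₗ[ℂ] Matrix K K ℂ), IsInstrument Φ ∧
    (∀ x, ∑ y, Φ (x, y) = I₁ x) ∧ (∀ y, ∑ x, Φ (x, y) = I₂ y)

/-- Parallel compatibility of two instruments. -/
def ParallelCompatible {ιx ιy H K₁ K₂ : Type*} [Fintype ιx] [Fintype ιy]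
    [Fintype H] [Fintype K₁] [Fintype K₂]
    (I₁ : ιx → (Matrix H H ℂ →ₗ[ℂ] Matrix K₁ K₁ ℂ))
    (I₂ : ιy → (Matrix H H ℂ →ₗ[ℂ] Matrix K₂ K₂ ℂ)) : Prop :=
  ∃ Φ : ιx × ιy → (Matrix H H ℂ →ₗ[ℂ] Matrix (K₁ × K₂) (K₁ × K₂) ℂ), IsInstrument Φ ∧
    (∀ x ρ, ∑ y, ptraceRight (Φ (x, y) ρ) = I₁ x ρ) ∧
    (∀ y ρ, ∑ x, ptraceLeft (Φ (x, y) ρ) = I₂ y ρ)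

/-- Tensor product of two maps on matrix algebras. -/
def tensorMap {A B C D : Type*} [Fintype A] [Fintype B] [Fintype C] [Fintype D]
    [DecidableEq A] [DecidableEq B]
    (Φ : Matrix A A ℂ →ₗ[ℂ] Matrix C C ℂ) (Ψ : Matrix B B ℂ →ₗ[ℂ] Matrix D D ℂ) :
    Matrix (A × B) (A × B) ℂ →ₗ[ℂ] Matrix (C × D) (C × D) ℂ where
  toFun M := fun p q => ∑ a, ∑ a', ∑ b, ∑ b',
    M (a, b) (a', b') * (Φ (Matrix.single a a' 1)) p.1 q.1
      * (Ψ (Matrix.single b b' 1)) p.2 q.2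
  map_add' M N := by
    funext p q
    simp [Matrix.add_apply, add_mul, Finset.sum_add_distrib]
    rfl
  map_smul' c M := by
    funext p q
    simp [Matrix.smul_apply, Finset.mul_sum, mul_assoc]
    show _ = c * _
    simp [Finset.mul_sum]



/-- Auxiliary: the sum of CP maps is CP. -/
lemma isCP_add {H K : Type*} [Fintype H] [Fintype K]
    {Φ Ψ : Matrix H H ℂ →ₗ[ℂ] Matrix K K ℂ} (hΦ : IsCP Φ) (hΨ : IsCP Ψ) :
    IsCP (Φ + Ψ) := by
  obtain ⟨m, Ks, hK⟩ := hΦ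
  obtain ⟨n, Ls, hL⟩ := hΨ
  refine ⟨m + n, Fin.append Ks Ls, fun ρ => ?_⟩
  rw [Fin.sum_univ_add]
  simp [hK, hL, Fin.append_left, Fin.append_right]

lemma isCP_sum {ι H K : Type*} [Fintype H] [Fintype K]
    (s : Finset ι) (f : ι → (Matrix H H ℂ →ₗ[ℂ] Matrix K K ℂ))
    (h : ∀ x ∈ s, IsCP (f x)) : IsCP (∑ x ∈ s, f x) := by
  classical
  refine Finset.sum_induction f IsCP (fun a b ha hb => isCP_add ha hb) ?_ h
  exact ⟨0, Fin.elim0, fun ρ => by simp⟩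

lemma kraus_entry {H K : Type*} [Fintype H] [DecidableEq H] (M : Matrix K H ℂ) (c d : H) (u v : K) :
    (M * single c d (1:ℂ) * Mᴴ) u v = M u c * (starRingEnd ℂ) (M v d) := by
  simp only [Matrix.mul_apply, Matrix.single, Matrix.of_apply, conjTranspose_apply,
    Finset.sum_mul, ite_mul, mul_ite, one_mul, zero_mul, mul_one, mul_zero, ite_and]
  rw [Finset.sum_comm]
  simp [Finset.sum_ite_eq, Finset.sum_ite_eq']

lemma ptraceRight_sum {A B ι : Type*} [Fintype B] (s : Finset ι)
    (f : ι → Matrix (A × B) (A × B) ℂ) :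
    ptraceRight (∑ x ∈ s, f x) = ∑ x ∈ s, ptraceRight (f x) := by
  funext i j
  simp [ptraceRight, Matrix.sum_apply]
  exact Finset.sum_comm

lemma ptraceLeft_sum {A B ι : Type*} [Fintype A] (s : Finset ι)
    (f : ι → Matrix (A × B) (A × B) ℂ) :
    ptraceLeft (∑ x ∈ s, f x) = ∑ x ∈ s, ptraceLeft (f x) := by
  funext i j
  simp [ptraceLeft, Matrix.sum_apply]
  exact Finset.sum_comm

/-- For `dim H ≥ 2`, the instruments `{p_i · id}` and `{q_j · id}`
(marginals of a probability distribution `r`) are not parallelly compatible. -/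
theorem stmt_11 {H : Type*} [Fintype H] [DecidableEq H] (hdim : 2 ≤ Fintype.card H)
    (r : Fin 2 → Fin 2 → ℝ) (hr : ∀ i j, 0 ≤ r i j) (hsum : ∑ i, ∑ j, r i j = 1)
    (p q : Fin 2 → ℝ) (hp : ∀ i, p i = ∑ j, r i j) (hq : ∀ j, q j = ∑ i, r i j) :
    ¬ ParallelCompatible
        (fun i => (p i : ℂ) • (LinearMap.id : Matrix H H ℂ →ₗ[ℂ] Matrix H H ℂ))
        (fun j => (q j : ℂ) • (LinearMap.id : Matrix H H ℂ →ₗ[ℂ] Matrix H H ℂ)) := by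
  rintro ⟨Φ, ⟨hCP, _⟩, hm1, hm2⟩
  -- the total channel
  set Λ : Matrix H H ℂ →ₗ[ℂ] Matrix (H × H) (H × H) ℂ := ∑ x, Φ x with hΛ
  obtain ⟨m, Ks, hK⟩ := isCP_sum Finset.univ Φ (fun x _ => hCP x)
  -- sums of marginals
  have hpsum : (∑ x, (p x : ℂ)) = 1 := by
    have : ∑ x, p x = 1 := by
      rw [← hsum]; exact Finset.sum_congr rfl (fun i _ => hp i)
    rw [← Complex.ofReal_sum, this, Complex.ofReal_one]
  have hqsum : (∑ y, (q y : ℂ)) = 1 := by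
    have : ∑ y, q y = 1 := by
      rw [← hsum, Finset.sum_comm]
      exact Finset.sum_congr rfl (fun j _ => hq j)
    rw [← Complex.ofReal_sum, this, Complex.ofReal_one]
  -- both marginals of Λ are the identity channel
  have hRight : ∀ ρ : Matrix H H ℂ, ptraceRight (Λ ρ) = ρ := by
    intro ρ
    have h1 : Λ ρ = ∑ x, Φ x ρ := by rw [hΛ]; simp [LinearMap.sum_apply]
    rw [h1, ptraceRight_sum, Fintype.sum_prod_type]
    have h2 : ∀ x : Fin 2, ∑ y : Fin 2, ptraceRight (Φ (x, y) ρ) = (p x : ℂ) • ρ := by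
      intro x; rw [hm1 x ρ]; simp
    simp only [h2, ← Finset.sum_smul, hpsum, one_smul]
  have hLeft : ∀ ρ : Matrix H H ℂ, ptraceLeft (Λ ρ) = ρ := by
    intro ρ
    have h1 : Λ ρ = ∑ x, Φ x ρ := by rw [hΛ]; simp [LinearMap.sum_apply]
    rw [h1, ptraceLeft_sum, Fintype.sum_prod_type_right]
    have h2 : ∀ y : Fin 2, ∑ x : Fin 2, ptraceLeft (Φ (x, y) ρ) = (q y : ℂ) • ρ := by
      intro y; rw [hm2 y ρ]; simp
    simp only [h2, ← Finset.sum_smul, hqsum, one_smul]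
  -- entrywise Kraus identities for basis inputs
  have hEntry : ∀ (c d : H) (u v : H × H),
      (Λ (single c d (1:ℂ))) u v = ∑ i, Ks i u c * (starRingEnd ℂ) (Ks i v d) := by
    intro c d u v
    rw [hK]
    simp [Matrix.sum_apply, kraus_entry]
  have hR : ∀ (c d a b : H),
      ∑ k, ∑ i, Ks i (a, k) c * (starRingEnd ℂ) (Ks i (b, k) d)
        = single c d (1:ℂ) a b := by
    intro c d a b
    have := congrFun (congrFun (hRight (single c d (1:ℂ))) a) b
    rw [← this]
    simp only [ptraceRight]
    exact Finset.sum_congr rfl (fun k _ => (hEntry c d (a, k) (b, k)).symm)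
  have hL : ∀ (c d a b : H),
      ∑ k, ∑ i, Ks i (k, a) c * (starRingEnd ℂ) (Ks i (k, b) d)
        = single c d (1:ℂ) a b := by
    intro c d a b
    have := congrFun (congrFun (hLeft (single c d (1:ℂ))) a) b
    rw [← this]
    simp only [ptraceLeft]
    exact Finset.sum_congr rfl (fun k _ => (hEntry c d (k, a) (k, b)).symm)
  -- vanishing of Kraus entries off the input index (first tensor coordinate)
  have hvan : ∀ (i : Fin m) (u : H × H) (c : H), u.1 ≠ c → Ks i u c = 0 := by
    intro i u c hne
    have h0 : ∑ k, ∑ i, Ks i (u.1, k) c * (starRingEnd ℂ) (Ks i (u.1, k) c) = 0 := by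
      rw [hR c c u.1 u.1, Matrix.single_apply_of_ne]
      exact fun h => hne h.1.symm
    have h1 : ∑ k, ∑ i, ((Complex.normSq (Ks i (u.1, k) c) : ℝ) : ℂ) = 0 := by
      rw [← h0]
      exact Finset.sum_congr rfl fun k _ => Finset.sum_congr rfl fun i _ =>
        (Complex.mul_conj _).symm ▸ rfl
    simp only [← Complex.ofReal_sum, Complex.ofReal_eq_zero] at h1
    have h2 : ∀ k ∈ (Finset.univ : Finset H), ∀ i ∈ (Finset.univ : Finset (Fin m)),
        Complex.normSq (Ks i (u.1, k) c) = 0 := by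
      intro k _
      have hk := (Finset.sum_eq_zero_iff_of_nonneg (fun k _ =>
        Finset.sum_nonneg (fun i _ => Complex.normSq_nonneg _))).mp h1 k (Finset.mem_univ k)
      exact fun i _ => (Finset.sum_eq_zero_iff_of_nonneg
        (fun i _ => Complex.normSq_nonneg _)).mp hk i (Finset.mem_univ i)
    have := h2 u.2 (Finset.mem_univ _) i (Finset.mem_univ i)
    have : Ks i (u.1, u.2) c = 0 := Complex.normSq_eq_zero.mp this
    simpa using this
  -- the contradiction: pick two distinct indices
  obtain ⟨a, b, hab⟩ := Fintype.exists_pair_of_one_lt_card (lt_of_lt_of_le one_lt_two hdim)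
  have hone : ∑ k, ∑ i, Ks i (k, a) a * (starRingEnd ℂ) (Ks i (k, b) b) = 1 := by
    rw [hL a b a b, Matrix.single_apply_same]
  have hzero : ∑ k, ∑ i, Ks i (k, a) a * (starRingEnd ℂ) (Ks i (k, b) b) = 0 := by
    refine Finset.sum_eq_zero fun k _ => Finset.sum_eq_zero fun i _ => ?_
    by_cases hk : k = a
    · have : Ks i (k, b) b = 0 := hvan i (k, b) b (by simp [hk, hab])
      rw [this]; simp
    · rw [hvan i (k, a) a hk]; simp
  rw [hone] at hzero
  exact one_ne_zero hzero


end
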